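/- Fix positive integers M ≤ K. The pointwise maximum F(μ) = max_{ℓ=1,…,M} (K - (M-ℓ)(K-ℓ)μ)/ℓ satisfies F(1/M) = (M+K-1)/M and F(1) = K/M. That is, at μ = 1/M the maximum is attained at ℓ = 1 and at μ = 1 it is attained at ℓ = M. -/

import Mathlib

/-- For `0 < M ≤ K`, the pointwise maximum
`F(μ) = max_{ℓ∈{1,…,M}} (K - (M-ℓ)(K-ℓ)μ)/ℓ` satisfies `F(1/M) = (M+K-1)/M`,
attained at `ℓ = 1`, and `F(1) = K/M`, attained at `ℓ = M`. -/
theorem ndt_lower_bound_corner_values (M K : ℕ) (hM : 0 < M) (hMK : M ≤ K) :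
    (∀ ℓ ∈ Finset.Icc 1 M,
      ((K : ℝ) - ((M : ℝ) - ℓ) * ((K : ℝ) - ℓ) * (1 / (M : ℝ))) / ℓ
        ≤ ((M : ℝ) + K - 1) / M) ∧
    ((K : ℝ) - ((M : ℝ) - 1) * ((K : ℝ) - 1) * (1 / (M : ℝ))) / 1
        = ((M : ℝ) + K - 1) / M ∧
    (∀ ℓ ∈ Finset.Icc 1 M,
      ((K : ℝ) - ((M : ℝ) - ℓ) * ((K : ℝ) - ℓ) * 1) / ℓ ≤ (K : ℝ) / M) ∧
    ((K : ℝ) - ((M : ℝ) - M) * ((K : ℝ) - M) * 1) / (M : ℝ) = (K : ℝ) / M := by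
  have hM0 : (0:ℝ) < M := by exact_mod_cast hM
  have hMK' : (M:ℝ) ≤ K := by exact_mod_cast hMK
  refine ⟨?_, ?_, ?_, ?_⟩
  · intro ℓ hℓ
    simp only [Finset.mem_Icc] at hℓ
    have h1 : (1:ℝ) ≤ ℓ := by exact_mod_cast hℓ.1
    have h2 : (ℓ:ℝ) ≤ M := by exact_mod_cast hℓ.2
    have hℓ0 : (0:ℝ) < ℓ := by linarith
    rw [div_le_div_iff₀ hℓ0 hM0]
    have hexp : ((K:ℝ) - ((M:ℝ) - ℓ) * ((K:ℝ) - ℓ) * (1 / (M:ℝ))) * M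
        = (ℓ:ℝ) * ((M:ℝ) + K - ℓ) := by
      field_simp; ring
    rw [hexp]
    have : (ℓ:ℝ) * ((M:ℝ) + K - ℓ) ≤ (ℓ:ℝ) * ((M:ℝ) + K - 1) := by
      apply mul_le_mul_of_nonneg_left (by linarith) (by linarith)
    linarith [this]
  · field_simp; ring
  · intro ℓ hℓ
    simp only [Finset.mem_Icc] at hℓ
    have h1 : (1:ℝ) ≤ ℓ := by exact_mod_cast hℓ.1
    have h2 : (ℓ:ℝ) ≤ M := by exact_mod_cast hℓ.2
    have hℓ0 : (0:ℝ) < ℓ := by linarith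
    rw [div_le_div_iff₀ hℓ0 hM0]
    have key : (0:ℝ) ≤ ((M:ℝ) - ℓ) * ((M:ℝ) * ((K:ℝ) - ℓ) - K) := by
      rcases eq_or_lt_of_le hℓ.2 with h | h
      · subst h; simp
      · have hℓ1 : (ℓ:ℝ) ≤ (M:ℝ) - 1 := by
          have : ℓ + 1 ≤ M := h
          have := (Nat.cast_le (α := ℝ)).2 this
          push_cast at this; linarith
        apply mul_nonneg (by linarith)
        nlinarith [hMK', hM0]
    nlinarith [key]
  · field_simp; ring
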